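/- Let α ∈ (0,1], let B ≥ 1 and λ ≥ 2B be reals, let N ≥ 2 be a real number, and let m be a natural number with (1+α)^m ≤ log₂ N. Then the sum from i = 0 to m of ((1+α)/B) · log₂(2^((1+α)^i)/B) / log₂(λ/B) is at most ((1+α)²/α) · (log₂ N / log₂(λ/B)) / B. -/

import Mathlib

/-- Update-potential sum from the proof of Theorem 2 (thm:pq): the total update
potential `∑_{i=0}^{m} ((1+α)/B) · log_{λ/B}(2^((1+α)^i)/B)` charged to one Update
operation is at most `((1+α)²/α) · log_{λ/B}(N) / B`, where
`log_{λ/B} y = log₂ y / log₂(λ/B)`. -/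
theorem stmt_12 (α B lam N : ℝ) (hα₀ : 0 < α) (hα₁ : α ≤ 1) (hB : 1 ≤ B)
    (hlam : 2 * B ≤ lam) (hN : 2 ≤ N) (m : ℕ)
    (h : (1 + α) ^ m ≤ Real.logb 2 N) :
    ∑ i ∈ Finset.range (m + 1),
        ((1 + α) / B) * Real.logb 2 ((2 : ℝ) ^ ((1 + α) ^ i) / B) /
          Real.logb 2 (lam / B)
      ≤ ((1 + α) ^ 2 / α) * (Real.logb 2 N / Real.logb 2 (lam / B)) / B := by
  have hB0 : (0:ℝ) < B := by linarith
  have hα' : (0:ℝ) < 1 + α := by linarith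
  have h2 : (2:ℝ) ≤ lam / B := (le_div_iff₀ hB0).mpr (by linarith)
  have hL : (1:ℝ) ≤ Real.logb 2 (lam / B) := by
    have := Real.logb_le_logb_of_le (b := 2) (by norm_num) (by norm_num : (0:ℝ) < 2) h2
    simpa using this
  have hL0 : (0:ℝ) < Real.logb 2 (lam / B) := by linarith
  set L := Real.logb 2 (lam / B) with hLdef
  have hc0 : 0 ≤ (1 + α) / B / L := by positivity
  -- bound each term
  have hterm : ∀ i ∈ Finset.range (m + 1),
      ((1 + α) / B) * Real.logb 2 ((2 : ℝ) ^ ((1 + α) ^ i) / B) / L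
        ≤ ((1 + α) / B / L) * (1 + α) ^ i := by
    intro i _
    have hlog : Real.logb 2 ((2 : ℝ) ^ ((1 + α) ^ i) / B) ≤ (1 + α) ^ i := by
      rw [Real.logb_div (by positivity) (ne_of_gt hB0),
        Real.logb_rpow (by norm_num) (by norm_num)]
      have : 0 ≤ Real.logb 2 B := Real.logb_nonneg (by norm_num) hB
      linarith
    calc ((1 + α) / B) * Real.logb 2 ((2 : ℝ) ^ ((1 + α) ^ i) / B) / L
        = ((1 + α) / B / L) * Real.logb 2 ((2 : ℝ) ^ ((1 + α) ^ i) / B) := by ring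
      _ ≤ ((1 + α) / B / L) * (1 + α) ^ i :=
          mul_le_mul_of_nonneg_left hlog hc0
  have hsum : ∑ i ∈ Finset.range (m + 1), (1 + α) ^ i
      = ((1 + α) ^ (m + 1) - 1) / α := by
    rw [geom_sum_eq (by linarith : (1:ℝ) + α ≠ 1)]
    ring_nf
  calc ∑ i ∈ Finset.range (m + 1),
        ((1 + α) / B) * Real.logb 2 ((2 : ℝ) ^ ((1 + α) ^ i) / B) / L
      ≤ ∑ i ∈ Finset.range (m + 1), ((1 + α) / B / L) * (1 + α) ^ i :=
        Finset.sum_le_sum hterm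
    _ = ((1 + α) / B / L) * (((1 + α) ^ (m + 1) - 1) / α) := by
        rw [← Finset.mul_sum, hsum]
    _ ≤ ((1 + α) / B / L) * (((1 + α) * Real.logb 2 N) / α) := by
        have hkey : (1 + α) ^ (m + 1) - 1 ≤ (1 + α) * Real.logb 2 N := by
          have h2' := mul_le_mul_of_nonneg_left h (le_of_lt hα')
          have h3' : (0:ℝ) < (1 + α) ^ (m + 1) := by positivity
          calc (1 + α) ^ (m + 1) - 1 ≤ (1 + α) ^ (m + 1) := by linarith
            _ = (1 + α) * (1 + α) ^ m := by ring
            _ ≤ _ := h2'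
        apply mul_le_mul_of_nonneg_left _ hc0
        exact (div_le_div_iff_of_pos_right hα₀).mpr hkey
    _ = ((1 + α) ^ 2 / α) * (Real.logb 2 N / L) / B := by
        field_simp
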